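/- Let p be a real polynomial of degree k ≥ 2. The secant map of p has no periodic orbit of minimal period three: there do not exist pairwise distinct real numbers a, b, d with p(a) ≠ p(b), p(b) ≠ p(d), p(d) ≠ p(a), such that sec(a,b) = d, sec(b,d) = a, and sec(d,a) = b, where sec(x,y) = y − p(y)(y−x)/(p(y)−p(x)). -/

import Mathlib

open Polynomial Filter Topology

/-- One step of the secant method: `sec(x,y) = y − p(y)(y−x)/(p(y)−p(x))`. -/
noncomputable def secStep (p : Polynomial ℝ) (x y : ℝ) : ℝ :=
  y - Polynomial.eval y p * (y - x) / (Polynomial.eval y p - Polynomial.eval x p)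

/-- The secant map `S(x,y) = (y, sec(x,y))`. -/
noncomputable def secMap (p : Polynomial ℝ) (z : ℝ × ℝ) : ℝ × ℝ :=
  (z.2, secStep p z.1 z.2)

theorem secant_no_period_three (p : Polynomial ℝ) (hp : 2 ≤ p.natDegree) :
    ¬ ∃ a b d : ℝ, a ≠ b ∧ b ≠ d ∧ d ≠ a ∧
      p.eval a ≠ p.eval b ∧ p.eval b ≠ p.eval d ∧ p.eval d ≠ p.eval a ∧
      secStep p a b = d ∧ secStep p b d = a ∧ secStep p d a = b := by
  rintro ⟨a, b, d, hab, hbd, hda, hAB, hBD, hDA, h1, h2, h3⟩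
  set A := p.eval a with hA
  set B := p.eval b with hB
  set D := p.eval d with hD
  unfold secStep at h1 h2 h3
  simp only [← hA, ← hB, ← hD] at h1 h2 h3
  have hBA : B - A ≠ 0 := sub_ne_zero.mpr hAB.symm
  have hDB : D - B ≠ 0 := sub_ne_zero.mpr hBD.symm
  have hAD : A - D ≠ 0 := sub_ne_zero.mpr hDA.symm
  field_simp at h1 h2 h3
  -- derive the three key relations
  have e1 : A * (d - b) = B * (d - a) := by linear_combination h1
  have e2 : B * (a - d) = D * (a - b) := by linear_combination h2
  have e3 : D * (b - a) = A * (b - d) := by linear_combination h3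
  have hX : (d - b) * (a - d) * (b - a) ≠ 0 := by
    exact mul_ne_zero (mul_ne_zero (sub_ne_zero.mpr hbd.symm)
      (sub_ne_zero.mpr hda.symm)) (sub_ne_zero.mpr hab.symm)
  have prod : A * (d - b) * (B * (a - d)) * (D * (b - a))
      = B * (d - a) * (D * (a - b)) * (A * (b - d)) := by
    rw [e1, e2, e3]
  have key : A * B * D * ((d - b) * (a - d) * (b - a)) = 0 := by
    have h2' : (2 : ℝ) * (A * B * D * ((d - b) * (a - d) * (b - a))) = 0 := by
      linear_combination prod
    linarith
  have hABD : A * B * D = 0 := by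
    rcases mul_eq_zero.mp key with h | h
    · exact h
    · exact absurd h hX
  rcases mul_eq_zero.mp hABD with h | hD0
  · rcases mul_eq_zero.mp h with hA0 | hB0
    · -- A = 0 ⇒ B * (d - a) = 0 ⇒ d = a
      have : B * (d - a) = 0 := by rw [← e1, hA0]; ring
      rcases mul_eq_zero.mp this with h' | h'
      · exact hAB (hA0.trans h'.symm)
      · exact hda (sub_eq_zero.mp h')
    · have : D * (a - b) = 0 := by rw [← e2, hB0]; ring
      rcases mul_eq_zero.mp this with h' | h'
      · exact hBD (hB0.trans h'.symm)
      · exact hab (sub_eq_zero.mp h')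
  · have : A * (b - d) = 0 := by rw [← e3, hD0]; ring
    rcases mul_eq_zero.mp this with h' | h'
    · exact hDA (hD0.trans h'.symm)
    · exact hbd (sub_eq_zero.mp h')
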